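/- For every natural number N ≥ 1 and every real number λ > 0, the matrix A_N(λ) has a strictly positive real eigenvalue if and only if λ > λ_c(N). -/

import Mathlib

open Matrix Polynomial Filter

/-- The (N+1)×(N+1) matrix A_N(λ): diagonal −1, entry (0,1) equal to 2λ,
entries λ on the other super/sub-diagonal positions, 0 elsewhere. -/
noncomputable def matA (lam : ℝ) (N : ℕ) : Matrix (Fin (N + 1)) (Fin (N + 1)) ℝ :=
  Matrix.of fun j k =>
    if j = k then -1
    else if (j : ℕ) = 0 ∧ (k : ℕ) = 1 then 2 * lam
    else if (j : ℕ) + 1 = (k : ℕ) ∨ (k : ℕ) + 1 = (j : ℕ) then lam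
    else 0

/-- The (N+1)×(N+1) matrix C_N: zero diagonal, entry (0,1) equal to 2,
entries 1 on the other super/sub-diagonal positions, 0 elsewhere;
so that A_N(λ) = −I + λ·C_N. -/
noncomputable def matC (N : ℕ) : Matrix (Fin (N + 1)) (Fin (N + 1)) ℝ :=
  Matrix.of fun j k =>
    if j = k then 0
    else if (j : ℕ) = 0 ∧ (k : ℕ) = 1 then 2
    else if (j : ℕ) + 1 = (k : ℕ) ∨ (k : ℕ) + 1 = (j : ℕ) then 1
    else 0

/-- The critical value λ_c(N) = inf {λ > 0 : det(−A_N(λ)) = 0}. -/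
noncomputable def lamCrit (N : ℕ) : ℝ :=
  sInf {lam : ℝ | 0 < lam ∧ (-(matA lam N)).det = 0}

/- ### Auxiliary lemmas -/

/-- Membership in the spectrum of a real matrix is equivalent to the vanishing of the
characteristic determinant. -/
lemma specMatrix_iff {n : ℕ} (M : Matrix (Fin n) (Fin n) ℝ) (x : ℝ) :
    x ∈ spectrum ℝ M ↔ (x • (1 : Matrix (Fin n) (Fin n) ℝ) - M).det = 0 := by
  rw [spectrum.mem_iff, Algebra.algebraMap_eq_smul_one, Matrix.isUnit_iff_isUnit_det,
    isUnit_iff_ne_zero, not_not]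

lemma evalCharpoly {n : ℕ} (M : Matrix (Fin n) (Fin n) ℝ) (r : ℝ) :
    M.charpoly.eval r = (r • (1 : Matrix (Fin n) (Fin n) ℝ) - M).det := by
  rw [Matrix.charpoly, ← Polynomial.coe_evalRingHom, RingHom.map_det]
  congr 1
  ext i j
  by_cases h : i = j
  · subst h
    simp [Matrix.charmatrix_apply_eq, Matrix.one_apply_eq]
  · simp [Matrix.charmatrix_apply_ne _ _ _ h, Matrix.one_apply_ne h]

lemma specMatrix_finite {n : ℕ} (M : Matrix (Fin n) (Fin n) ℝ) : (spectrum ℝ M).Finite := by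
  refine (Polynomial.finite_setOf_isRoot (M.charpoly_monic.ne_zero)).subset fun x hx => ?_
  rw [Set.mem_setOf_eq, IsRoot, evalCharpoly]
  exact (specMatrix_iff M x).mp hx

lemma matC_split (N : ℕ) (j k : Fin (N+1)) :
    matC N j k = (if (j : ℕ) + 1 = (k : ℕ) then (if (j : ℕ) = 0 then 2 else 1) else 0)
      + (if (j : ℕ) = 0 then 0 else if (j : ℕ) - 1 = (k : ℕ) then 1 else 0) := by
  have h' : j = k ↔ (j : ℕ) = (k : ℕ) := ⟨fun h => by rw [h], fun h => Fin.ext h⟩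
  simp only [matC, Matrix.of_apply]
  by_cases h : j = k
  · rw [if_pos h, h' ] at *
    split_ifs <;> first | (exfalso; omega) | norm_num
  · rw [if_neg h]
    have hv : (j : ℕ) ≠ (k : ℕ) := fun hh => h (Fin.ext hh)
    split_ifs <;> first | (exfalso; omega) | norm_num

lemma sum_delta {n : ℕ} (v : Fin n → ℝ) (c : ℝ) (m : ℕ) (hm : m < n) :
    (∑ k : Fin n, (if m = (k : ℕ) then c else 0) * v k) = c * v ⟨m, hm⟩ := by
  rw [Finset.sum_eq_single ⟨m, hm⟩]
  · simp
  · intro b _ hb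
    rw [if_neg fun h => hb (Fin.ext h.symm), zero_mul]
  · intro h; exact absurd (Finset.mem_univ _) h

lemma sum_delta_zero {n : ℕ} (v : Fin n → ℝ) (c : ℝ) (m : ℕ) (hm : ¬ m < n) :
    (∑ k : Fin n, (if m = (k : ℕ) then c else 0) * v k) = 0 :=
  Finset.sum_eq_zero fun k _ => by
    have hk := k.isLt
    rw [if_neg (by omega), zero_mul]

/-- The explicit eigenvector `v j = cos (j θ)` with `θ = π / (2(N+1))` for the matrix `C_N`,
with eigenvalue `2 cos θ`. -/
lemma matC_mulVec (N : ℕ) (hN : 1 ≤ N) :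
    (matC N).mulVec (fun k : Fin (N+1) => Real.cos (((k : ℕ) : ℝ) * (Real.pi / (2 * ((N : ℝ) + 1)))))
      = (2 * Real.cos (Real.pi / (2 * ((N : ℝ) + 1)))) •
        (fun k : Fin (N+1) => Real.cos (((k : ℕ) : ℝ) * (Real.pi / (2 * ((N : ℝ) + 1))))) := by
  set θ : ℝ := Real.pi / (2 * ((N : ℝ) + 1)) with hθ
  set v : Fin (N+1) → ℝ := fun k => Real.cos (((k : ℕ) : ℝ) * θ) with hv
  funext j
  have key : ∀ (x : ℝ), Real.cos ((x+1) * θ) + Real.cos ((x-1) * θ)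
      = 2 * Real.cos θ * Real.cos (x * θ) := by
    intro x
    have e1 : (x+1) * θ = x * θ + θ := by ring
    have e2 : (x-1) * θ = x * θ - θ := by ring
    rw [e1, e2, Real.cos_add, Real.cos_sub]; ring
  have hNpos : ((N : ℝ) + 1) ≠ 0 := by positivity
  have hcosN1 : Real.cos (((N : ℝ) + 1) * θ) = 0 := by
    rw [hθ, show ((N : ℝ) + 1) * (Real.pi / (2 * ((N : ℝ) + 1))) = Real.pi / 2 by
      field_simp]
    exact Real.cos_pi_div_two
  show (∑ k, matC N j k * v k) = _
  rw [Finset.sum_congr rfl fun k _ => by rw [matC_split N j k, add_mul], Finset.sum_add_distrib]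
  have hjm : (j : ℕ) - 1 < N + 1 := by omega
  have e1 : (∑ k : Fin (N+1), (if (j : ℕ) + 1 = (k : ℕ) then (if (j : ℕ) = 0 then (2:ℝ) else 1) else 0) * v k)
      = if h : (j : ℕ) + 1 < N + 1 then (if (j : ℕ) = 0 then (2:ℝ) else 1) * v ⟨(j : ℕ) + 1, h⟩ else 0 := by
    by_cases h : (j : ℕ) + 1 < N + 1
    · rw [dif_pos h]; exact sum_delta v _ _ h
    · rw [dif_neg h]; exact sum_delta_zero v _ _ h
  have e2 : (∑ k : Fin (N+1), (if (j : ℕ) = 0 then (0:ℝ) else if (j : ℕ) - 1 = (k : ℕ) then 1 else 0) * v k)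
      = if (j : ℕ) = 0 then 0 else v ⟨(j : ℕ) - 1, hjm⟩ := by
    by_cases h : (j : ℕ) = 0
    · simp [h]
    · rw [if_neg h, Finset.sum_congr rfl fun k _ => by rw [if_neg h]]
      rw [sum_delta v 1 ((j : ℕ) - 1) hjm, one_mul]
  rw [e1, e2]
  simp only [Pi.smul_apply, smul_eq_mul]
  by_cases hj0 : (j : ℕ) = 0
  · rw [dif_pos (show (j : ℕ) + 1 < N + 1 by omega)]
    simp only [if_pos hj0]
    simp only [hv, hj0]
    push_cast
    norm_num
  · simp only [if_neg hj0]
    have hc2 : (((j : ℕ) - 1 : ℕ) : ℝ) = ((j : ℕ) : ℝ) - 1 := by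
      have h1 : 1 ≤ (j : ℕ) := by omega
      push_cast [h1]; ring
    by_cases hjN : (j : ℕ) = N
    · rw [dif_neg (by omega)]
      simp only [hv]
      rw [hc2]
      have hjNr : ((j : ℕ) : ℝ) = (N : ℝ) := by rw [hjN]
      rw [hjNr]
      have hkey := key ((N : ℕ) : ℝ)
      rw [hcosN1] at hkey
      linarith [hkey]
    · rw [dif_pos (by omega : (j : ℕ) + 1 < N + 1)]
      simp only [if_neg hj0, one_mul]
      simp only [hv]
      rw [hc2]
      have hc1 : (((j : ℕ) + 1 : ℕ) : ℝ) = ((j : ℕ) : ℝ) + 1 := by push_cast; ring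
      rw [hc1, key]

/-- `2 cos (π / (2(N+1)))` is an eigenvalue of `C_N`. -/
lemma mu0_mem_spec (N : ℕ) (hN : 1 ≤ N) :
    2 * Real.cos (Real.pi / (2 * ((N : ℝ) + 1))) ∈ spectrum ℝ (matC N) := by
  rw [specMatrix_iff, ← Matrix.exists_mulVec_eq_zero_iff]
  refine ⟨(fun k : Fin (N+1) => Real.cos (((k : ℕ) : ℝ) * (Real.pi / (2 * ((N : ℝ) + 1))))), ?_, ?_⟩
  · intro h
    have h0 := congrFun h (0 : Fin (N+1))
    simp only [Fin.val_zero, Nat.cast_zero, zero_mul, Real.cos_zero, Pi.zero_apply] at h0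
    exact one_ne_zero h0
  · rw [Matrix.sub_mulVec, Matrix.smul_mulVec, Matrix.one_mulVec, matC_mulVec N hN,
      sub_self]

lemma mu0_pos (N : ℕ) (hN : 1 ≤ N) : 0 < 2 * Real.cos (Real.pi / (2 * ((N : ℝ) + 1))) := by
  have hθpos : 0 < Real.pi / (2 * ((N : ℝ) + 1)) := by positivity
  have hθlt : Real.pi / (2 * ((N : ℝ) + 1)) < Real.pi / 2 := by
    apply div_lt_div_of_pos_left Real.pi_pos (by norm_num)
    have : (1:ℝ) ≤ (N : ℝ) := by exact_mod_cast hN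
    linarith
  have := Real.cos_pos_of_mem_Ioo ⟨by linarith [Real.pi_pos], hθlt⟩
  linarith

lemma matA_eq_smul (lam : ℝ) (N : ℕ) : matA lam N = lam • matC N - 1 := by
  ext j k
  simp only [matA, matC, Matrix.of_apply, Matrix.sub_apply, Matrix.smul_apply,
    Matrix.one_apply, smul_eq_mul]
  split_ifs <;> ring

lemma specA_iff (N : ℕ) (lam : ℝ) (hlam : 0 < lam) (x : ℝ) :
    x ∈ spectrum ℝ (matA lam N) ↔ (x + 1) / lam ∈ spectrum ℝ (matC N) := by
  rw [specMatrix_iff, specMatrix_iff]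
  have hM : x • (1 : Matrix (Fin (N+1)) (Fin (N+1)) ℝ) - matA lam N
      = lam • (((x+1)/lam) • (1 : Matrix (Fin (N+1)) (Fin (N+1)) ℝ) - matC N) := by
    rw [matA_eq_smul, smul_sub, smul_smul,
      show lam * ((x+1)/lam) = x + 1 by field_simp, add_smul, one_smul]
    abel
  rw [hM, Matrix.det_smul, mul_eq_zero, or_iff_right (pow_ne_zero _ hlam.ne')]

lemma detNegA_iff (N : ℕ) (l : ℝ) (hl : 0 < l) :
    (-(matA l N)).det = 0 ↔ (1/l) ∈ spectrum ℝ (matC N) := by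
  rw [specMatrix_iff]
  have hM : -(matA l N) = l • ((1/l) • (1 : Matrix (Fin (N+1)) (Fin (N+1)) ℝ) - matC N) := by
    rw [matA_eq_smul, neg_sub, smul_sub, smul_smul, mul_one_div, div_self hl.ne', one_smul]
  rw [hM, Matrix.det_smul, mul_eq_zero, or_iff_right (pow_ne_zero _ hl.ne')]

/-- For N ≥ 1 and λ > 0, the matrix A_N(λ) has a strictly positive real
eigenvalue if and only if λ > λ_c(N). -/
theorem pos_eigenvalue_iff (N : ℕ) (hN : 1 ≤ N) (lam : ℝ) (hlam : 0 < lam) :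
    (∃ x ∈ spectrum ℝ (matA lam N), 0 < x) ↔ lamCrit N < lam := by
  set P : Set ℝ := {μ | μ ∈ spectrum ℝ (matC N) ∧ 0 < μ} with hP
  have hPfin : P.Finite := (specMatrix_finite (matC N)).subset fun μ h => h.1
  have hPne : P.Nonempty := ⟨2 * Real.cos (Real.pi / (2 * ((N : ℝ) + 1))),
    mu0_mem_spec N hN, mu0_pos N hN⟩
  set M := sSup P with hMdef
  have hMP : M ∈ P := hPne.csSup_mem hPfin
  have hMub : ∀ μ ∈ P, μ ≤ M := fun μ h => le_csSup hPfin.bddAbove h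
  have hMpos : 0 < M := hMP.2
  have hcrit : lamCrit N = 1 / M := by
    have hleast : IsLeast {l : ℝ | 0 < l ∧ (-(matA l N)).det = 0} (1/M) := by
      constructor
      · refine ⟨by positivity, (detNegA_iff N _ (by positivity)).mpr ?_⟩
        rw [one_div_one_div]
        exact hMP.1
      · rintro l ⟨hl, hdet⟩
        have h1l : (1/l) ∈ P := ⟨(detNegA_iff N l hl).mp hdet, by positivity⟩
        exact (one_div_le hMpos hl).mpr (hMub _ h1l)
    exact hleast.csInf_eq
  rw [hcrit]
  constructor
  · rintro ⟨x, hx, hxpos⟩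
    have hμ : (x+1)/lam ∈ spectrum ℝ (matC N) := (specA_iff N lam hlam x).mp hx
    have hμpos : 0 < (x+1)/lam := div_pos (by linarith) hlam
    have hle := hMub _ ⟨hμ, hμpos⟩
    have h1 : 1/lam < M := by
      refine lt_of_lt_of_le ?_ hle
      rw [div_lt_div_iff₀ hlam hlam]
      nlinarith
    exact (one_div_lt hMpos hlam).mpr h1
  · intro hlt
    have h1 : 1/lam < M := (one_div_lt hMpos hlam).mp hlt
    have h2 : 1 < lam * M := by
      have := (div_lt_iff₀ hlam).mp h1
      nlinarith
    refine ⟨lam * M - 1, ?_, by linarith⟩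
    rw [specA_iff N lam hlam, show (lam * M - 1 + 1)/lam = M by field_simp; ring]
    exact hMP.1
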